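/- Let H be a quasitriangular Hopf algebra over a commutative ring k with R-matrix R and Drinfeld element u = Σ S(R⁽²⁾)·R⁽¹⁾. Then for all h ∈ H: S²(h) = u · h · u⁻¹, i.e. the square of the antipode is the inner automorphism given by conjugation by u. -/

import Mathlib

open TensorProduct

variable (k : Type*) [CommRing k] (H : Type*) [Ring H] [HopfAlgebra k H]

/-- `R ⊗ 1` in `H ⊗ H ⊗ H`. -/
noncomputable def leg12 : H ⊗[k] H →ₐ[k] H ⊗[k] (H ⊗[k] H) :=
  Algebra.TensorProduct.map (AlgHom.id k H) Algebra.TensorProduct.includeLeft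

/-- `R` with legs in factors 1 and 3. -/
noncomputable def leg13 : H ⊗[k] H →ₐ[k] H ⊗[k] (H ⊗[k] H) :=
  Algebra.TensorProduct.map (AlgHom.id k H) Algebra.TensorProduct.includeRight

/-- `1 ⊗ R` in `H ⊗ H ⊗ H`. -/
noncomputable def leg23 : H ⊗[k] H →ₐ[k] H ⊗[k] (H ⊗[k] H) :=
  Algebra.TensorProduct.includeRight

/-- `id ⊗ Δ`. -/
noncomputable def idComul : H ⊗[k] H →ₐ[k] H ⊗[k] (H ⊗[k] H) :=
  Algebra.TensorProduct.map (AlgHom.id k H) (Bialgebra.comulAlgHom k H)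

/-- `Δ ⊗ id` (landing in `H ⊗ (H ⊗ H)` via the associator). -/
noncomputable def comulId : H ⊗[k] H →ₐ[k] H ⊗[k] (H ⊗[k] H) :=
  (Algebra.TensorProduct.assoc k k k H H H).toAlgHom.comp
    (Algebra.TensorProduct.map (Bialgebra.comulAlgHom k H) (AlgHom.id k H))

/-- The opposite comultiplication `Δᵒᵖ = τ ∘ Δ`. -/
noncomputable def comulOp : H →ₐ[k] H ⊗[k] H :=
  (Algebra.TensorProduct.comm k H H).toAlgHom.comp (Bialgebra.comulAlgHom k H)

/-- The Drinfeld element `u = Σ S(R⁽²⁾)·R⁽¹⁾` of a quasitriangular Hopf algebra. -/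
noncomputable def drinfeldU (R : H ⊗[k] H) : H :=
  LinearMap.mul' k H
    (TensorProduct.map (HopfAlgebra.antipode (R := k)) (LinearMap.id : H →ₗ[k] H)
      ((TensorProduct.comm k H H) R))

namespace Stmt7Aux

open HopfAlgebra Coalgebra

variable {k H}

lemma rsum_left {a : H} {ι : Type*} (r : Coalgebra.Repr k a ι) :
    ∑ i ∈ r.index, Coalgebra.counit (R := k) (r.right i) • r.left i = a := by
  have h := congrArg (TensorProduct.rid k H) (Coalgebra.sum_tmul_counit_eq (R := k) r)
  rw [map_sum] at h
  simp only [TensorProduct.rid_tmul, one_smul] at h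
  exact h

lemma rsum_right {a : H} {ι : Type*} (r : Coalgebra.Repr k a ι) :
    ∑ i ∈ r.index, Coalgebra.counit (R := k) (r.left i) • r.right i = a := by
  have h := congrArg (TensorProduct.lid k H) (Coalgebra.sum_counit_tmul_eq (R := k) r)
  rw [map_sum] at h
  simp only [TensorProduct.lid_tmul, one_smul] at h
  exact h

lemma antipode_one' : HopfAlgebra.antipode (R := k) (1 : H) = 1 := by
  have h := HopfAlgebra.mul_antipode_rTensor_comul_apply (R := k) (a := (1 : H))
  simpa [Bialgebra.comul_one, Algebra.TensorProduct.one_def] using h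

/-- `∑ f(x₁) ⋅ η(ε(x₂)) = f x`. -/
lemma sum_mul_algebraMap_counit {x : H} {ι : Type*} (rx : Coalgebra.Repr k x ι) (f : H →ₗ[k] H) :
    ∑ i ∈ rx.index, f (rx.left i) * algebraMap k H (Coalgebra.counit (R := k) (rx.right i))
      = f x := by
  simp_rw [← Algebra.commutes, ← Algebra.smul_def, ← map_smul, ← map_sum, rsum_left]

/-- `∑ η(ε(x₁)) ⋅ f(x₂) = f x`. -/
lemma sum_algebraMap_counit_mul {x : H} {ι : Type*} (rx : Coalgebra.Repr k x ι) (f : H →ₗ[k] H) :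
    ∑ i ∈ rx.index, algebraMap k H (Coalgebra.counit (R := k) (rx.left i)) * f (rx.right i)
      = f x := by
  simp_rw [← Algebra.smul_def, ← map_smul, ← map_sum, rsum_right]

/-- `∑ ε(x₂) • f(x₁) = f x`. -/
lemma sum_smul_counit_right {x : H} {ι : Type*} (rx : Coalgebra.Repr k x ι) (f : H →ₗ[k] H) :
    ∑ i ∈ rx.index, Coalgebra.counit (R := k) (rx.right i) • f (rx.left i) = f x := by
  simp_rw [← map_smul, ← map_sum, rsum_left]

/-- `∑ ε(x₁) • f(x₂) = f x`. -/
lemma sum_smul_counit_left {x : H} {ι : Type*} (rx : Coalgebra.Repr k x ι) (f : H →ₗ[k] H) :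
    ∑ i ∈ rx.index, Coalgebra.counit (R := k) (rx.left i) • f (rx.right i) = f x := by
  simp_rw [← map_smul, ← map_sum, rsum_right]

/-- `∑∑ S(x₁y₁)(x₂y₂) = η(ε(x)ε(y))`. -/
lemma sum_antipode_mul_mul {x y : H} {ι ι' : Type*} (rx : Coalgebra.Repr k x ι) (ry : Coalgebra.Repr k y ι') :
    ∑ j ∈ rx.index, ∑ j' ∈ ry.index,
      HopfAlgebra.antipode (R := k) (rx.left j * ry.left j') * (rx.right j * ry.right j')
      = algebraMap k H (Coalgebra.counit (R := k) x * Coalgebra.counit (R := k) y) := by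
  have hc : Coalgebra.comul (R := k) (x * y) =
      ∑ j ∈ rx.index, ∑ j' ∈ ry.index,
        (rx.left j * ry.left j') ⊗ₜ[k] (rx.right j * ry.right j') := by
    rw [Bialgebra.comul_mul, ← rx.eq, ← ry.eq, Finset.sum_mul_sum]
    simp [Algebra.TensorProduct.tmul_mul_tmul]
  have h2 := HopfAlgebra.mul_antipode_rTensor_comul_apply (R := k) (a := x * y)
  rw [hc, Bialgebra.counit_mul] at h2
  simpa [map_sum] using h2


variable (k H)

/-- `x ⊗ (y ⊗ z) ↦ S(x⋅b) ⋅ (y ⋅ S z)`. -/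
noncomputable def phi1 (b : H) : H ⊗[k] (H ⊗[k] H) →ₗ[k] H :=
  LinearMap.mul' k H ∘ₗ TensorProduct.map
    ((HopfAlgebra.antipode (R := k)) ∘ₗ LinearMap.mulRight k b)
    (LinearMap.mul' k H ∘ₗ TensorProduct.map LinearMap.id (HopfAlgebra.antipode (R := k)))

@[simp] lemma phi1_tmul (b x y z : H) :
    phi1 k H b (x ⊗ₜ[k] (y ⊗ₜ[k] z)) =
      HopfAlgebra.antipode (R := k) (x * b) * (y * HopfAlgebra.antipode (R := k) z) := by
  simp [phi1]

/-- `x ⊗ (y ⊗ z) ↦ S(c⋅x) ⋅ ((d⋅y) ⋅ (S z ⋅ S e))`. -/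
noncomputable def phi3 (c d e : H) : H ⊗[k] (H ⊗[k] H) →ₗ[k] H :=
  LinearMap.mul' k H ∘ₗ TensorProduct.map
    ((HopfAlgebra.antipode (R := k)) ∘ₗ LinearMap.mulLeft k c)
    (LinearMap.mul' k H ∘ₗ TensorProduct.map (LinearMap.mulLeft k d)
      (LinearMap.mulRight k (HopfAlgebra.antipode (R := k) e) ∘ₗ
        (HopfAlgebra.antipode (R := k))))

@[simp] lemma phi3_tmul (c d e x y z : H) :
    phi3 k H c d e (x ⊗ₜ[k] (y ⊗ₜ[k] z)) =
      HopfAlgebra.antipode (R := k) (c * x) *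
        ((d * y) * (HopfAlgebra.antipode (R := k) z * HopfAlgebra.antipode (R := k) e)) := by
  simp [phi3]

variable {k H}

theorem antipode_mul (a b : H) :
    HopfAlgebra.antipode (R := k) (a * b) =
      HopfAlgebra.antipode (R := k) b * HopfAlgebra.antipode (R := k) a := by
  classical
  set S : H →ₗ[k] H := HopfAlgebra.antipode (R := k) with hS
  set ra := Coalgebra.Repr.arbitrary k a with hra
  set rb := Coalgebra.Repr.arbitrary k b with hrb
  set rla : ∀ i : ra.ι, Coalgebra.Repr k (ra.left i) (H × H) :=
    fun i => Coalgebra.Repr.arbitrary k (ra.left i) with hrla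
  set rra : ∀ i : ra.ι, Coalgebra.Repr k (ra.right i) (H × H) :=
    fun i => Coalgebra.Repr.arbitrary k (ra.right i) with hrra
  set rlb : ∀ p : rb.ι, Coalgebra.Repr k (rb.left p) (H × H) :=
    fun p => Coalgebra.Repr.arbitrary k (rb.left p) with hrlb
  set rrb : ∀ p : rb.ι, Coalgebra.Repr k (rb.right p) (H × H) :=
    fun p => Coalgebra.Repr.arbitrary k (rb.right p) with hrrb
  have ca := Coalgebra.sum_tmul_tmul_eq (R := k) ra rla rra
  have cb := Coalgebra.sum_tmul_tmul_eq (R := k) rb rlb rrb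
  -- Step 1 : S(a*b) = φ₁ applied to the right-nested triple sum for a
  have e1 : phi1 k H b (∑ i ∈ ra.index, ∑ q ∈ (rra i).index,
      ra.left i ⊗ₜ[k] ((rra i).left q ⊗ₜ[k] (rra i).right q)) = S (a * b) := by
    rw [map_sum]
    simp_rw [map_sum, phi1_tmul, ← Finset.mul_sum]
    simp_rw [HopfAlgebra.sum_mul_antipode_eq_algebraMap_counit (rra _)]
    exact sum_mul_algebraMap_counit ra (S ∘ₗ LinearMap.mulRight k b)
  -- Step 2 : rewrite via coassociativity
  have e2 : S (a * b) = ∑ i ∈ ra.index, ∑ j ∈ (rla i).index,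
      S ((rla i).left j * b) * ((rla i).right j * S (ra.right i)) := by
    rw [← e1, ← ca, map_sum]
    simp_rw [map_sum, phi1_tmul]
    simp_rw [← hS]
  -- Step 3 : φ₃ on the right-nested triple sum for b
  have e3 : ∀ c d e : H, phi3 k H c d e (∑ p ∈ rb.index, ∑ s ∈ (rrb p).index,
      rb.left p ⊗ₜ[k] ((rrb p).left s ⊗ₜ[k] (rrb p).right s)) = S (c * b) * (d * S e) := by
    intro c d e
    rw [map_sum]
    simp_rw [map_sum, phi3_tmul]
    simp_rw [← hS]
    have hterm : ∀ (p : rb.ι) (s : (rrb p).ι),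
        S (c * rb.left p) * ((d * (rrb p).left s) * (S ((rrb p).right s) * S e)) =
        (S (c * rb.left p) * d) * ((rrb p).left s * S ((rrb p).right s)) * S e := by
      intro p s
      simp only [mul_assoc]
    simp_rw [hterm, ← Finset.sum_mul, ← Finset.mul_sum, hS,
      HopfAlgebra.sum_mul_antipode_eq_algebraMap_counit (rrb _), ← hS, Algebra.algebraMap_eq_smul_one]
    simp only [mul_smul_comm, smul_mul_assoc, mul_one, smul_smul]
    have h := sum_smul_counit_right rb (LinearMap.mulRight k d ∘ₗ S ∘ₗ LinearMap.mulLeft k c)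
    simp only [LinearMap.coe_comp, Function.comp_apply, LinearMap.mulRight_apply,
      LinearMap.mulLeft_apply] at h
    rw [h, mul_assoc]
  -- Step 4 : φ₃ on the left-nested triple sum for b
  have e4 : ∀ c d e : H, phi3 k H c d e (∑ p ∈ rb.index, ∑ j' ∈ (rlb p).index,
      (rlb p).left j' ⊗ₜ[k] ((rlb p).right j' ⊗ₜ[k] rb.right p)) =
      ∑ p ∈ rb.index, ∑ j' ∈ (rlb p).index,
        S (c * (rlb p).left j') * ((d * (rlb p).right j') * (S (rb.right p) * S e)) := by
    intro c d e
    rw [map_sum]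
    simp_rw [map_sum, phi3_tmul]
    simp_rw [← hS]
  -- Step 5 : the big quadruple sum
  have e5 : S (a * b) = ∑ i ∈ ra.index, ∑ j ∈ (rla i).index, ∑ p ∈ rb.index,
      ∑ j' ∈ (rlb p).index,
        S ((rla i).left j * (rlb p).left j') *
          (((rla i).right j * (rlb p).right j') * (S (rb.right p) * S (ra.right i))) := by
    rw [e2]
    refine Finset.sum_congr rfl fun i _ => Finset.sum_congr rfl fun j _ => ?_
    rw [← e3 ((rla i).left j) ((rla i).right j) (ra.right i), ← cb, e4]
  rw [e5]
  -- swap the `j` and `p` sums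
  have e6 : ∀ i : ra.ι, (∑ j ∈ (rla i).index, ∑ p ∈ rb.index, ∑ j' ∈ (rlb p).index,
      S ((rla i).left j * (rlb p).left j') *
        (((rla i).right j * (rlb p).right j') * (S (rb.right p) * S (ra.right i)))) =
      ∑ p ∈ rb.index, ∑ j ∈ (rla i).index, ∑ j' ∈ (rlb p).index,
        S ((rla i).left j * (rlb p).left j') *
          (((rla i).right j * (rlb p).right j') * (S (rb.right p) * S (ra.right i))) :=
    fun i => Finset.sum_comm
  simp_rw [e6]
  -- reduce inner double sum via `sum_antipode_mul_mul`
  have e7 : ∀ (i : ra.ι) (p : rb.ι),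
      (∑ j ∈ (rla i).index, ∑ j' ∈ (rlb p).index,
        S ((rla i).left j * (rlb p).left j') *
          (((rla i).right j * (rlb p).right j') * (S (rb.right p) * S (ra.right i)))) =
      Coalgebra.counit (R := k) (ra.left i) •
        (Coalgebra.counit (R := k) (rb.left p) • (S (rb.right p) * S (ra.right i))) := by
    intro i p
    have hterm : ∀ (j : (rla i).ι) (j' : (rlb p).ι),
        S ((rla i).left j * (rlb p).left j') *
          (((rla i).right j * (rlb p).right j') * (S (rb.right p) * S (ra.right i))) =
        (S ((rla i).left j * (rlb p).left j') *
          ((rla i).right j * (rlb p).right j')) * (S (rb.right p) * S (ra.right i)) := by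
      intro j j'
      simp only [mul_assoc]
    simp_rw [hterm, ← Finset.sum_mul, hS, sum_antipode_mul_mul (rla i) (rlb p),
      Algebra.algebraMap_eq_smul_one]
    simp only [smul_mul_assoc, one_mul, mul_smul]
  simp_rw [e7]
  -- finish with the two counit laws
  have e8 : ∀ i : ra.ι, (∑ p ∈ rb.index,
      Coalgebra.counit (R := k) (ra.left i) •
        (Coalgebra.counit (R := k) (rb.left p) • (S (rb.right p) * S (ra.right i)))) =
      Coalgebra.counit (R := k) (ra.left i) • (S b * S (ra.right i)) := by
    intro i
    rw [← Finset.smul_sum]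
    congr 1
    exact sum_smul_counit_left rb (LinearMap.mulRight k (S (ra.right i)) ∘ₗ S)
  simp_rw [e8]
  exact sum_smul_counit_left ra (LinearMap.mulLeft k (S b) ∘ₗ S)


variable (k H)

/-- `x ⊗ y ↦ S(y)⋅x`. -/
noncomputable def fmap : H ⊗[k] H →ₗ[k] H :=
  LinearMap.mul' k H ∘ₗ TensorProduct.map (HopfAlgebra.antipode (R := k)) LinearMap.id ∘ₗ
    (TensorProduct.comm k H H).toLinearMap

@[simp] lemma fmap_tmul (x y : H) :
    fmap k H (x ⊗ₜ[k] y) = HopfAlgebra.antipode (R := k) y * x := by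
  simp [fmap]

/-- `x ⊗ (y ⊗ z) ↦ (S²(z)⋅S(y))⋅(u⋅x)`. -/
noncomputable def gmap (u : H) : H ⊗[k] (H ⊗[k] H) →ₗ[k] H :=
  LinearMap.mul' k H ∘ₗ
    TensorProduct.map
      (LinearMap.mul' k H ∘ₗ
        TensorProduct.map (HopfAlgebra.antipode (R := k) ∘ₗ HopfAlgebra.antipode (R := k))
          (HopfAlgebra.antipode (R := k)) ∘ₗ (TensorProduct.comm k H H).toLinearMap)
      (LinearMap.mulLeft k u) ∘ₗ
    (TensorProduct.comm k H (H ⊗[k] H)).toLinearMap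

@[simp] lemma gmap_tmul (u x y z : H) :
    gmap k H u (x ⊗ₜ[k] (y ⊗ₜ[k] z)) =
      (HopfAlgebra.antipode (R := k) (HopfAlgebra.antipode (R := k) z) *
        HopfAlgebra.antipode (R := k) y) * (u * x) := by
  simp [gmap]

variable {k H}

/-- `∑ S²(x₂) S(x₁) = ε(x) • 1`. -/
lemma claim1 (x : H) {ι : Type*} (rx : Coalgebra.Repr k x ι) :
    ∑ i ∈ rx.index,
      HopfAlgebra.antipode (R := k) (HopfAlgebra.antipode (R := k) (rx.right i)) *
        HopfAlgebra.antipode (R := k) (rx.left i)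
      = Coalgebra.counit (R := k) x • (1 : H) := by
  have h : ∀ i : rx.ι,
      HopfAlgebra.antipode (R := k) (HopfAlgebra.antipode (R := k) (rx.right i)) *
        HopfAlgebra.antipode (R := k) (rx.left i) =
      HopfAlgebra.antipode (R := k)
        (rx.left i * HopfAlgebra.antipode (R := k) (rx.right i)) :=
    fun i => (antipode_mul _ _).symm
  simp_rw [h, ← map_sum, HopfAlgebra.sum_mul_antipode_eq_algebraMap_counit rx,
    Algebra.algebraMap_eq_smul_one, map_smul, antipode_one']


/-- The key identity: `∑ S(x₂) (u x₁) = ε(x) • u`. -/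
lemma keyK (R : H ⊗[k] H)
    (hR₃ : ∀ h : H, comulOp k H h * R = R * Bialgebra.comulAlgHom k H h)
    (x : H) {ι : Type*} (rx : Coalgebra.Repr k x ι) :
    ∑ i ∈ rx.index,
      HopfAlgebra.antipode (R := k) (rx.right i) * (drinfeldU k H R * rx.left i)
      = Coalgebra.counit (R := k) x • drinfeldU k H R := by
  classical
  obtain ⟨sR, hsR⟩ := TensorProduct.exists_finset (R := k) R
  have hu : drinfeldU k H R = ∑ t ∈ sR, HopfAlgebra.antipode (R := k) t.2 * t.1 := by
    rw [drinfeldU, hsR]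
    simp only [map_sum, TensorProduct.comm_tmul, TensorProduct.map_tmul,
      LinearMap.mul'_apply, LinearMap.id_coe, id_eq]
  have hL : comulOp k H x = ∑ i ∈ rx.index, rx.right i ⊗ₜ[k] rx.left i := by
    simp only [comulOp, AlgHom.coe_comp, Function.comp_apply, Bialgebra.comulAlgHom_apply,
      AlgEquiv.toAlgHom_eq_coe, AlgHom.coe_coe]
    rw [← rx.eq, map_sum]
    simp only [AlgEquiv.coe_toAlgHom, Algebra.TensorProduct.comm_tmul]
  have heq := hR₃ x
  rw [hL, Bialgebra.comulAlgHom_apply, ← rx.eq, hsR] at heq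
  have heq2 := congrArg (fmap k H) heq
  have hLv : fmap k H ((∑ i ∈ rx.index, rx.right i ⊗ₜ[k] rx.left i) *
      (∑ t ∈ sR, t.1 ⊗ₜ[k] t.2)) = Coalgebra.counit (R := k) x • drinfeldU k H R := by
    rw [Finset.sum_mul_sum]
    simp_rw [Algebra.TensorProduct.tmul_mul_tmul]
    rw [map_sum]
    simp_rw [map_sum, fmap_tmul]
    rw [Finset.sum_comm]
    have ht : ∀ (t : H × H) (i : rx.ι),
        HopfAlgebra.antipode (R := k) (rx.left i * t.2) * (rx.right i * t.1) =
        HopfAlgebra.antipode (R := k) t.2 *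
          ((HopfAlgebra.antipode (R := k) (rx.left i) * rx.right i) * t.1) := by
      intro t i
      rw [antipode_mul]
      simp only [mul_assoc]
    simp_rw [ht, ← Finset.mul_sum, ← Finset.sum_mul,
      HopfAlgebra.sum_antipode_mul_eq_algebraMap_counit rx, Algebra.algebraMap_eq_smul_one]
    simp only [smul_mul_assoc, one_mul, mul_smul_comm]
    rw [← Finset.smul_sum, hu]
  have hRv : fmap k H ((∑ t ∈ sR, t.1 ⊗ₜ[k] t.2) *
      (∑ i ∈ rx.index, rx.left i ⊗ₜ[k] rx.right i)) =
      ∑ i ∈ rx.index,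
        HopfAlgebra.antipode (R := k) (rx.right i) * (drinfeldU k H R * rx.left i) := by
    rw [Finset.sum_mul_sum]
    simp_rw [Algebra.TensorProduct.tmul_mul_tmul]
    rw [map_sum]
    simp_rw [map_sum, fmap_tmul]
    rw [Finset.sum_comm]
    have ht : ∀ (i : rx.ι) (t : H × H),
        HopfAlgebra.antipode (R := k) (t.2 * rx.right i) * (t.1 * rx.left i) =
        HopfAlgebra.antipode (R := k) (rx.right i) *
          ((HopfAlgebra.antipode (R := k) t.2 * t.1) * rx.left i) := by
      intro i t
      rw [antipode_mul]
      simp only [mul_assoc]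
    simp_rw [ht, ← Finset.mul_sum, ← Finset.sum_mul, ← hu]
  rw [hLv, hRv] at heq2
  exact heq2.symm

end Stmt7Aux


/-- `S²(h) = u·h·u⁻¹`. -/
theorem stmt7
    (R R' : H ⊗[k] H)
    (hinv₁ : R * R' = 1) (hinv₂ : R' * R = 1)
    (hR₁ : idComul k H R = leg13 k H R * leg12 k H R)
    (hR₂ : comulId k H R = leg13 k H R * leg23 k H R)
    (hR₃ : ∀ h : H, comulOp k H h * R = R * Bialgebra.comulAlgHom k H h)
    (u' : H) (hu₁ : drinfeldU k H R * u' = 1) (hu₂ : u' * drinfeldU k H R = 1) :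
    ∀ h : H, HopfAlgebra.antipode (R := k) (HopfAlgebra.antipode (R := k) h) =
      drinfeldU k H R * h * u' := by
  classical
  intro h
  set u := drinfeldU k H R with hu
  set rh := Coalgebra.Repr.arbitrary k h with hrh
  set rl : ∀ i : rh.ι, Coalgebra.Repr k (rh.left i) (H × H) :=
    fun i => Coalgebra.Repr.arbitrary k (rh.left i) with hrl
  set rr : ∀ i : rh.ι, Coalgebra.Repr k (rh.right i) (H × H) :=
    fun i => Coalgebra.Repr.arbitrary k (rh.right i) with hrr
  have ch := Coalgebra.sum_tmul_tmul_eq (R := k) rh rl rr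
  have EGr : Stmt7Aux.gmap k H u (∑ i ∈ rh.index, ∑ q ∈ (rr i).index,
      rh.left i ⊗ₜ[k] ((rr i).left q ⊗ₜ[k] (rr i).right q)) = u * h := by
    rw [map_sum]
    simp_rw [map_sum, Stmt7Aux.gmap_tmul, ← Finset.sum_mul, Stmt7Aux.claim1 _ (rr _)]
    simp only [smul_mul_assoc, one_mul]
    exact Stmt7Aux.sum_smul_counit_right rh (LinearMap.mulLeft k u)
  have EGl : Stmt7Aux.gmap k H u (∑ i ∈ rh.index, ∑ j ∈ (rl i).index,
      (rl i).left j ⊗ₜ[k] ((rl i).right j ⊗ₜ[k] rh.right i)) =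
      HopfAlgebra.antipode (R := k) (HopfAlgebra.antipode (R := k) h) * u := by
    rw [map_sum]
    simp_rw [map_sum, Stmt7Aux.gmap_tmul]
    have ht : ∀ (i : rh.ι) (j : (rl i).ι),
        (HopfAlgebra.antipode (R := k) (HopfAlgebra.antipode (R := k) (rh.right i)) *
          HopfAlgebra.antipode (R := k) ((rl i).right j)) * (u * (rl i).left j) =
        HopfAlgebra.antipode (R := k) (HopfAlgebra.antipode (R := k) (rh.right i)) *
          (HopfAlgebra.antipode (R := k) ((rl i).right j) * (u * (rl i).left j)) := by
      intro i j
      simp only [mul_assoc]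
    simp_rw [ht, ← Finset.mul_sum, hu, Stmt7Aux.keyK R hR₃ _ (rl _)]
    simp only [mul_smul_comm]
    exact Stmt7Aux.sum_smul_counit_left rh
      (LinearMap.mulRight k u ∘ₗ HopfAlgebra.antipode (R := k) ∘ₗ HopfAlgebra.antipode (R := k))
  have main : HopfAlgebra.antipode (R := k) (HopfAlgebra.antipode (R := k) h) * u = u * h := by
    rw [← EGl, ch, EGr]
  calc HopfAlgebra.antipode (R := k) (HopfAlgebra.antipode (R := k) h)
      = HopfAlgebra.antipode (R := k) (HopfAlgebra.antipode (R := k) h) * (u * u') := by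
        rw [hu₁, mul_one]
    _ = (HopfAlgebra.antipode (R := k) (HopfAlgebra.antipode (R := k) h) * u) * u' := by
        rw [mul_assoc]
    _ = (u * h) * u' := by rw [main]
    _ = drinfeldU k H R * h * u' := rfl
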